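/- arXiv:1505.03220 — 2 statements merged into one kernel-verified Lean document; each statement's English description precedes it below -/
import Mathlib

section
/- For integers d ≥ 0 and 1 ≤ k ≤ d, the coefficients c_{d,k} = Σ_{i=0}^{k} (−1)^i C(d,i) S(d−i, k−i) (where S denotes Stirling numbers of the second kind and C binomial coefficients) satisfy the recursion c_{d+1,k} = d·c_{d−1,k−1} + k·c_{d,k}. -/
open Finset

/-- Stirling numbers of the second kind: `stirling2 n k` is the number of
partitions of an `n`-set into `k` nonempty blocks. -/
def stirling2 : ℕ → ℕ → ℕ
  | 0, 0 => 1
  | 0, _ + 1 => 0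
  | _ + 1, 0 => 0
  | n + 1, k + 1 => (k + 1) * stirling2 n (k + 1) + stirling2 n k

/-- The signed coefficients `c_{d,k} = ∑_{i=0}^{k} (-1)^i C(d,i) S(d-i, k-i)`
appearing in the expansion of binomial central moments. -/
noncomputable def momentCoeff (d k : ℕ) : ℝ :=
  ∑ i ∈ Finset.range (k + 1),
    (-1 : ℝ) ^ i * (d.choose i) * (stirling2 (d - i) (k - i))

/-- Recursion for the central-moment coefficients:
`c_{d+1,k} = d c_{d-1,k-1} + k c_{d,k}` for `1 ≤ k ≤ d`. -/
theorem momentCoeff_rec (d k : ℕ) (hk : 1 ≤ k) (hkd : k ≤ d) :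
    momentCoeff (d + 1) k =
      (d : ℝ) * momentCoeff (d - 1) (k - 1) + (k : ℝ) * momentCoeff d k := by
  obtain ⟨K, rfl⟩ : ∃ K, k = K + 1 := ⟨k - 1, by omega⟩
  obtain ⟨D, rfl⟩ : ∃ D, d = D + 1 := ⟨d - 1, by omega⟩
  have hKD : K ≤ D := by omega
  simp only [momentCoeff, Nat.add_sub_cancel]
  push_cast
  -- notation
  set P : ℝ := ∑ j ∈ Finset.range (K+1),
      (-1:ℝ)^j * ((D+1).choose j) * ((K+1-j : ℕ) : ℝ) * (stirling2 (D+1-j) (K+1-j)) with hP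
  set Q : ℝ := ∑ x ∈ Finset.range (K+1),
      (-1:ℝ)^x * (D.choose x) * (stirling2 (D-x) (K-x)) with hQ
  set R : ℝ := ∑ i ∈ Finset.range (K+1+1),
      (-1:ℝ)^i * ((D+1).choose i) * (stirling2 (D+1-i) (K+1-i)) with hR
  set SE : ℝ := ∑ j ∈ Finset.range (K+1),
      (-1:ℝ)^j * ((D+1).choose j) * (stirling2 (D+1-j) (K-j)) with hSE
  set G : ℝ := ∑ j ∈ Finset.range (K+1+1),
      (-1:ℝ)^j * ((D+1).choose j) * (stirling2 (D+1+1-j) (K+1-j)) with hG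
  -- Step A = P
  have e1 : (∑ i ∈ Finset.range (K+1+1),
        (-1:ℝ)^i * ((D+1+1).choose i) * (stirling2 (D+1+1-i) (K+1-i)))
      = (∑ i ∈ Finset.range (K+1),
          (-1:ℝ)^(i+1) * ((D+1+1).choose (i+1)) * (stirling2 (D+1+1-(i+1)) (K+1-(i+1))))
        + (-1:ℝ)^0 * ((D+1+1).choose 0) * (stirling2 (D+1+1-0) (K+1-0)) :=
    Finset.sum_range_succ' _ (K+1)
  have e3 : (∑ i ∈ Finset.range (K+1),
        (-1:ℝ)^(i+1) * ((D+1+1).choose (i+1)) * (stirling2 (D+1+1-(i+1)) (K+1-(i+1))))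
      = (∑ i ∈ Finset.range (K+1),
          -((-1:ℝ)^i * ((D+1).choose i) * (stirling2 (D+1-i) (K-i))))
        + ∑ i ∈ Finset.range (K+1),
          (-1:ℝ)^(i+1) * ((D+1).choose (i+1)) * (stirling2 (D+1+1-(i+1)) (K+1-(i+1))) := by
    rw [← Finset.sum_add_distrib]
    refine Finset.sum_congr rfl fun i hi => ?_
    have h1 : D+1+1-(i+1) = D+1-i := by omega
    have h2 : K+1-(i+1) = K-i := by omega
    rw [h1, h2, Nat.choose_succ_succ]
    push_cast
    ring
  have e3' : (∑ i ∈ Finset.range (K+1),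
        -((-1:ℝ)^i * ((D+1).choose i) * (stirling2 (D+1-i) (K-i)))) = -SE := by
    rw [hSE, ← Finset.sum_neg_distrib]
  have e4 : G = (∑ i ∈ Finset.range (K+1),
        (-1:ℝ)^(i+1) * ((D+1).choose (i+1)) * (stirling2 (D+1+1-(i+1)) (K+1-(i+1))))
      + (-1:ℝ)^0 * ((D+1).choose 0) * (stirling2 (D+1+1-0) (K+1-0)) :=
    Finset.sum_range_succ' _ (K+1)
  have e5 : G = (∑ j ∈ Finset.range (K+1),
        (-1:ℝ)^j * ((D+1).choose j) * (stirling2 (D+1+1-j) (K+1-j)))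
      + (-1:ℝ)^(K+1) * ((D+1).choose (K+1)) * (stirling2 (D+1+1-(K+1)) (K+1-(K+1))) :=
    Finset.sum_range_succ _ (K+1)
  have e6 : (stirling2 (D+1+1-(K+1)) (K+1-(K+1)) : ℝ) = 0 := by
    have h1 : D+1+1-(K+1) = (D-K)+1 := by omega
    have h2 : K+1-(K+1) = 0 := by omega
    rw [h1, h2, show stirling2 ((D-K)+1) 0 = 0 from rfl]
    norm_num
  rw [e6, mul_zero, add_zero] at e5
  have e8 : (∑ j ∈ Finset.range (K+1),
        (-1:ℝ)^j * ((D+1).choose j) * (stirling2 (D+1+1-j) (K+1-j))) = P + SE := by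
    rw [hP, hSE, ← Finset.sum_add_distrib]
    refine Finset.sum_congr rfl fun j hj => ?_
    have hj' : j ≤ K := by have := Finset.mem_range.mp hj; omega
    have h1 : D+1+1-j = (D+1-j)+1 := by omega
    have h2 : K+1-j = (K-j)+1 := by omega
    have h3 : stirling2 ((D+1-j)+1) ((K-j)+1)
        = ((K-j)+1) * stirling2 (D+1-j) ((K-j)+1) + stirling2 (D+1-j) (K-j) := rfl
    rw [h1, h2, h3]
    push_cast
    ring
  have hf0 : ((-1:ℝ)^0 * ((D+1+1).choose 0) * (stirling2 (D+1+1-0) (K+1-0)) : ℝ)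
      = (-1:ℝ)^0 * ((D+1).choose 0) * (stirling2 (D+1+1-0) (K+1-0)) := by
    norm_num
  have hAP : (∑ i ∈ Finset.range (K+1+1),
      (-1:ℝ)^i * ((D+1+1).choose i) * (stirling2 (D+1+1-i) (K+1-i))) = P := by
    rw [e1, e3, e3', hf0]
    rw [e8] at e5
    rw [e4] at e5
    linarith [e5]
  -- Step (K+1)*R - P = -(D+1)*Q
  have p1 : P = ∑ i ∈ Finset.range (K+1+1),
      (-1:ℝ)^i * ((D+1).choose i) * ((K+1-i : ℕ) : ℝ) * (stirling2 (D+1-i) (K+1-i)) := by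
    rw [Finset.sum_range_succ, Nat.sub_self]
    norm_num
    exact hP
  have p3 : ((K:ℝ)+1) * R - P = ∑ i ∈ Finset.range (K+1+1),
      (-1:ℝ)^i * (i:ℝ) * ((D+1).choose i) * (stirling2 (D+1-i) (K+1-i)) := by
    rw [p1, hR, Finset.mul_sum, ← Finset.sum_sub_distrib]
    refine Finset.sum_congr rfl fun i hi => ?_
    have hi' : i ≤ K+1 := by have := Finset.mem_range.mp hi; omega
    rw [Nat.cast_sub hi']
    push_cast
    ring
  have p4 : (∑ i ∈ Finset.range (K+1+1),
        (-1:ℝ)^i * (i:ℝ) * ((D+1).choose i) * (stirling2 (D+1-i) (K+1-i)))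
      = (∑ j ∈ Finset.range (K+1),
          (-1:ℝ)^(j+1) * ((j:ℝ)+1) * ((D+1).choose (j+1)) * (stirling2 (D+1-(j+1)) (K+1-(j+1))))
        + (-1:ℝ)^0 * ((0:ℕ):ℝ) * ((D+1).choose 0) * (stirling2 (D+1-0) (K+1-0)) := by
    rw [Finset.sum_range_succ' (fun i => (-1:ℝ)^i * (i:ℝ) * ((D+1).choose i) * (stirling2 (D+1-i) (K+1-i))) (K+1)]
    push_cast
    ring
  have p5 : (∑ j ∈ Finset.range (K+1),
        (-1:ℝ)^(j+1) * ((j:ℝ)+1) * ((D+1).choose (j+1)) * (stirling2 (D+1-(j+1)) (K+1-(j+1))))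
      = -(((D:ℝ)+1) * Q) := by
    rw [hQ, Finset.mul_sum, ← Finset.sum_neg_distrib]
    refine Finset.sum_congr rfl fun j hj => ?_
    have h1 : D+1-(j+1) = D-j := by omega
    have h2 : K+1-(j+1) = K-j := by omega
    have h3 : (D+1) * (D.choose j) = ((D+1).choose (j+1)) * (j+1) := Nat.add_one_mul_choose_eq D j
    have h3' : ((D:ℝ)+1) * (D.choose j) = ((D+1).choose (j+1) : ℕ) * ((j:ℝ)+1) := by
      exact_mod_cast congrArg (Nat.cast : ℕ → ℝ) h3
    rw [h1, h2]
    linear_combination ((-1:ℝ)^j * (stirling2 (D-j) (K-j) : ℝ)) * h3'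
  rw [hAP]
  rw [p5] at p4
  norm_num at p4
  linarith [p3, p4]
end

section
/- Under the boundedness condition p_{ij} ≤ B p_i p_j for all i,j (with equal positive marginals p_i = q_i), the quantity γ² = Σ_i (p_i − p_{ii})²/p_i² + Σ_{i≠j} (p_{ij}+p_{ji})²/(4 p_i p_j) satisfies m − 2B ≤ γ² ≤ m + B². Moreover, if p_{ij} = p_i p_j (independence), then γ² = m − 1 and μ = Σ_i (1 − p_{ii}/p_i) = m − 1. -/
open Finset

/-- Bounds for the normalizing variance `γ²` of the degenerate divergence CLT:
under the boundedness condition `p_{ij} ≤ B pᵢ pⱼ` (with equal positive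
marginals), `m − 2B ≤ γ² ≤ m + B²`; and under independence `p_{ij} = pᵢ pⱼ`
one has `γ² = m − 1` and `μ = ∑ᵢ (1 − p_{ii}/pᵢ) = m − 1`. -/
theorem gamma_sq_bounds (m : ℕ) (P : Fin m → Fin m → ℝ) (B : ℝ)
    (hP : ∀ i j, 0 ≤ P i j) (hP1 : ∑ i, ∑ j, P i j = 1)
    (hmarg : ∀ i, (∑ j, P i j) = ∑ j, P j i)
    (hpos : ∀ i, 0 < ∑ j, P i j)
    (hB : ∀ i j, P i j ≤ B * (∑ k, P i k) * (∑ k, P j k)) :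
    ((m : ℝ) - 2 * B ≤
        (∑ i, ((∑ j, P i j) - P i i) ^ 2 / (∑ j, P i j) ^ 2) +
          ∑ i, ∑ j ∈ Finset.univ.filter (· ≠ i),
            (P i j + P j i) ^ 2 / (4 * (∑ k, P i k) * (∑ k, P j k)) ∧
      (∑ i, ((∑ j, P i j) - P i i) ^ 2 / (∑ j, P i j) ^ 2) +
          ∑ i, ∑ j ∈ Finset.univ.filter (· ≠ i),
            (P i j + P j i) ^ 2 / (4 * (∑ k, P i k) * (∑ k, P j k)) ≤
        (m : ℝ) + B ^ 2) ∧
      ((∀ i j, P i j = (∑ k, P i k) * (∑ k, P k j)) →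
        ((∑ i, ((∑ j, P i j) - P i i) ^ 2 / (∑ j, P i j) ^ 2) +
            ∑ i, ∑ j ∈ Finset.univ.filter (· ≠ i),
              (P i j + P j i) ^ 2 / (4 * (∑ k, P i k) * (∑ k, P j k)) =
          (m : ℝ) - 1 ∧
          (∑ i, (1 - P i i / ∑ j, P i j)) = (m : ℝ) - 1)) := by
  have hm : 0 < m := by
    rcases Nat.eq_zero_or_pos m with h | h
    · subst h; simp at hP1
    · exact h
  have hppos : ∀ i, 0 < ∑ j, P i j := hpos
  have hpsum : (∑ i, ∑ j, P i j) = 1 := hP1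
  have hPle : ∀ i j, P i j ≤ ∑ k, P i k := fun i j =>
    Finset.single_le_sum (fun k _ => hP i k) (mem_univ j)
  obtain ⟨i0⟩ := Fin.pos_iff_nonempty.mp hm
  have hB0 : 0 ≤ B := by
    nlinarith [hP i0 i0, hB i0 i0, mul_pos (hppos i0) (hppos i0)]
  -- first sum bounds
  have hS1_le : (∑ i, ((∑ j, P i j) - P i i) ^ 2 / (∑ j, P i j) ^ 2) ≤ (m : ℝ) := by
    calc (∑ i, ((∑ j, P i j) - P i i) ^ 2 / (∑ j, P i j) ^ 2)
        ≤ ∑ _i : Fin m, (1 : ℝ) := by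
          refine Finset.sum_le_sum fun i _ => ?_
          rw [div_le_one (pow_pos (hppos i) 2)]
          nlinarith [hP i i, hPle i i]
      _ = (m : ℝ) := by simp
  have hS1_ge : (m : ℝ) - 2 * B ≤ ∑ i, ((∑ j, P i j) - P i i) ^ 2 / (∑ j, P i j) ^ 2 := by
    have : ∑ i, (1 - 2 * B * ∑ j, P i j) ≤
        ∑ i, ((∑ j, P i j) - P i i) ^ 2 / (∑ j, P i j) ^ 2 := by
      refine Finset.sum_le_sum fun i _ => ?_
      rw [le_div_iff₀ (pow_pos (hppos i) 2)]
      nlinarith [hB i i, hP i i, hppos i, sq_nonneg (P i i)]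
    calc (m : ℝ) - 2 * B = ∑ i, (1 - 2 * B * ∑ j, P i j) := by
          rw [Finset.sum_sub_distrib, ← Finset.mul_sum, hpsum]; simp
      _ ≤ _ := this
  have hS2_ge : (0 : ℝ) ≤ ∑ i, ∑ j ∈ Finset.univ.filter (· ≠ i),
      (P i j + P j i) ^ 2 / (4 * (∑ k, P i k) * (∑ k, P j k)) := by
    refine Finset.sum_nonneg fun i _ => Finset.sum_nonneg fun j _ => ?_
    have hd : 0 < 4 * (∑ k, P i k) * (∑ k, P j k) :=
      mul_pos (mul_pos (by norm_num) (hppos i)) (hppos j)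
    exact div_nonneg (sq_nonneg _) hd.le
  have hS2_le : (∑ i, ∑ j ∈ Finset.univ.filter (· ≠ i),
      (P i j + P j i) ^ 2 / (4 * (∑ k, P i k) * (∑ k, P j k))) ≤ B ^ 2 := by
    have step : ∀ i : Fin m, (∑ j ∈ Finset.univ.filter (· ≠ i),
        (P i j + P j i) ^ 2 / (4 * (∑ k, P i k) * (∑ k, P j k))) ≤
        B ^ 2 * ∑ j, P i j := by
      intro i
      have h1 : (∑ j ∈ Finset.univ.filter (· ≠ i),
          (P i j + P j i) ^ 2 / (4 * (∑ k, P i k) * (∑ k, P j k))) ≤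
          ∑ j ∈ Finset.univ.filter (· ≠ i), B ^ 2 * ((∑ k, P i k) * (∑ k, P j k)) := by
        refine Finset.sum_le_sum fun j _ => ?_
        have hd : 0 < 4 * (∑ k, P i k) * (∑ k, P j k) :=
          mul_pos (mul_pos (by norm_num) (hppos i)) (hppos j)
        rw [div_le_iff₀ hd]
        nlinarith [hB i j, hB j i, hP i j, hP j i, mul_pos (hppos i) (hppos j)]
      have h2 : (∑ j ∈ Finset.univ.filter (· ≠ i), B ^ 2 * ((∑ k, P i k) * (∑ k, P j k))) ≤
          ∑ j : Fin m, B ^ 2 * ((∑ k, P i k) * (∑ k, P j k)) := by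
        refine Finset.sum_le_sum_of_subset_of_nonneg (Finset.filter_subset _ _)
          fun j _ _ => ?_
        exact mul_nonneg (sq_nonneg B) (mul_nonneg (hppos i).le (hppos j).le)
      have h3 : (∑ j : Fin m, B ^ 2 * ((∑ k, P i k) * (∑ k, P j k))) =
          B ^ 2 * ∑ j, P i j := by
        rw [← Finset.mul_sum, ← Finset.mul_sum, hpsum, mul_one]
      linarith
    calc _ ≤ ∑ i, B ^ 2 * ∑ j, P i j := Finset.sum_le_sum fun i _ => step i
      _ = B ^ 2 := by rw [← Finset.mul_sum, hpsum, mul_one]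
  refine ⟨⟨by linarith, by linarith⟩, ?_⟩
  intro hind
  have hind' : ∀ i j, P i j = (∑ k, P i k) * (∑ k, P j k) := by
    intro i j
    rw [hind i j, ← hmarg j]
  have hT1 : ∀ i : Fin m, ((∑ j, P i j) - P i i) ^ 2 / (∑ j, P i j) ^ 2 =
      (1 - ∑ j, P i j) ^ 2 := by
    intro i
    rw [hind' i i, div_eq_iff (ne_of_gt (pow_pos (hppos i) 2))]
    ring
  have hT2 : ∀ i : Fin m, (∑ j ∈ Finset.univ.filter (· ≠ i),
      (P i j + P j i) ^ 2 / (4 * (∑ k, P i k) * (∑ k, P j k))) =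
      (∑ k, P i k) * (1 - ∑ k, P i k) := by
    intro i
    have : ∀ j ∈ Finset.univ.filter (· ≠ i),
        (P i j + P j i) ^ 2 / (4 * (∑ k, P i k) * (∑ k, P j k)) =
        (∑ k, P i k) * (∑ k, P j k) := by
      intro j _
      rw [hind' i j, hind' j i, div_eq_iff (ne_of_gt (mul_pos (mul_pos (by norm_num : (0:ℝ) < 4) (hppos i)) (hppos j)))]
      ring
    rw [Finset.sum_congr rfl this, ← Finset.mul_sum]
    congr 1
    rw [Finset.filter_ne', Finset.sum_erase_eq_sub (Finset.mem_univ i), hpsum]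
  constructor
  · rw [Finset.sum_congr rfl fun i _ => hT1 i, Finset.sum_congr rfl fun i _ => hT2 i,
      ← Finset.sum_add_distrib]
    have : ∀ i : Fin m, (1 - ∑ j, P i j) ^ 2 + (∑ k, P i k) * (1 - ∑ k, P i k) =
        1 - ∑ j, P i j := fun i => by ring
    rw [Finset.sum_congr rfl fun i _ => this i, Finset.sum_sub_distrib, hpsum]
    simp
  · have : ∀ i : Fin m, 1 - P i i / ∑ j, P i j = 1 - ∑ j, P i j := by
      intro i
      rw [hind' i i, mul_div_assoc, div_self (ne_of_gt (hppos i))]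
      ring
    rw [Finset.sum_congr rfl fun i _ => this i, Finset.sum_sub_distrib, hpsum]
    simp
end
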